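/- Let N ≥ 2, let k ∈ Z/NZ, let n be the size of the k-monomial minimal solution of (E_N), and suppose this solution is irreducible. Then for every integer l ≥ 2 and every a ∈ Z/NZ, the l-tuple (a, k, …, k, a) (whose first and last entries are a and whose l−2 middle entries all equal k) is a solution of (E_N) if and only if either l ≡ 0 (mod n) and a = k, or l ≡ 2 (mod n) and a = 0. -/
import Mathlib


open Matrix

/-- The elementary matrix `[[a, -1], [1, 0]]` over `ZMod N`. -/
def genMat {N : ℕ} (a : ZMod N) : Matrix (Fin 2) (Fin 2) (ZMod N) :=
  !![a, -1; 1, 0]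

/-- `Mword [a₁, …, aₙ]` is the matrix `Mₙ(a₁, …, aₙ) = genMat aₙ * ⋯ * genMat a₁`. -/
def Mword {N : ℕ} (l : List (ZMod N)) : Matrix (Fin 2) (Fin 2) (ZMod N) :=
  (l.reverse.map genMat).prod

/-- A tuple (encoded as a list) is a solution of `(E_N)` if its matrix is `±Id`. -/
def IsSolutionE {N : ℕ} (l : List (ZMod N)) : Prop :=
  Mword l = 1 ∨ Mword l = -1

/-- The size of the `k`-monomial minimal solution of `(E_N)`: the least positive `n`
such that the constant `n`-tuple `(k, …, k)` is a solution of `(E_N)`. -/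
noncomputable def monomialSize (N : ℕ) (k : ZMod N) : ℕ :=
  sInf {n : ℕ | 0 < n ∧ IsSolutionE (List.replicate n k)}

/-- The `k`-monomial minimal solution of `(E_N)`. -/
noncomputable def monoSol (N : ℕ) (k : ZMod N) : List (ZMod N) :=
  List.replicate (monomialSize N k) k

/-- The sum `⊕` of two tuples:
`(a₁,…,aₘ) ⊕ (b₁,…,bₗ) = (a₁+bₗ, a₂, …, aₘ₋₁, aₘ+b₁, b₂, …, bₗ₋₁)`. -/
def oplus {N : ℕ} (a b : List (ZMod N)) : List (ZMod N) :=
  (a.headD 0 + b.getLastD 0) ::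
    ((a.drop 1).dropLast ++ (a.getLastD 0 + b.headD 0) :: (b.drop 1).dropLast)

/-- Two tuples are equivalent (`∼`) if one is obtained from the other by a cyclic
permutation, possibly composed with order reversal. -/
def TupEquiv {N : ℕ} (c d : List (ZMod N)) : Prop :=
  (∃ i, d = c.rotate i) ∨ (∃ i, d = c.reverse.rotate i)

/-- A tuple is reducible if it is equivalent to a sum `a ⊕ b` where `b` is a solution of
`(E_N)` and both `a`, `b` have length at least `3`. -/
def IsReducibleE {N : ℕ} (c : List (ZMod N)) : Prop :=
  ∃ a b : List (ZMod N), 3 ≤ a.length ∧ 3 ≤ b.length ∧ IsSolutionE b ∧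
    TupEquiv c (oplus a b)

/-- An irreducible solution of `(E_N)`: a solution of size at least `3` that is not
reducible (the solution `(0,0)` is not considered irreducible). -/
def IsIrreducibleE {N : ℕ} (c : List (ZMod N)) : Prop :=
  IsSolutionE c ∧ 3 ≤ c.length ∧ ¬ IsReducibleE c

/-- A reducible solution of `(E_N)`: a solution that is not irreducible. -/
def IsReducibleSol {N : ℕ} (c : List (ZMod N)) : Prop :=
  IsSolutionE c ∧ ¬ IsIrreducibleE c

/-- `N` is monomially irreducible if for every nonzero `k ∈ ZMod N` the `k`-monomial
minimal solution of `(E_N)` is irreducible. -/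
def MonomiallyIrreducible (N : ℕ) : Prop :=
  ∀ k : ZMod N, k ≠ 0 → IsIrreducibleE (monoSol N k)

/-- `N` is quasi monomially irreducible if for every integer `k` coprime to `N` the
`(k mod N)`-monomial minimal solution of `(E_N)` is irreducible. -/
def QuasiMonomiallyIrreducible (N : ℕ) : Prop :=
  ∀ k : ℤ, Int.gcd k (N : ℤ) = 1 → IsIrreducibleE (monoSol N (k : ZMod N))

/-- `N` is semi monomially irreducible: if `N` is even but not divisible by `4`, this
requires that for every integer `a` coprime to `N/2` the `(2a mod N)`-monomial minimal
solution of `(E_N)` is irreducible; otherwise (i.e. `N` odd or divisible by `4`), it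
requires the same for every integer `a` coprime to `N`. -/
def SemiMonomiallyIrreducible (N : ℕ) : Prop :=
  if 2 ∣ N ∧ ¬ (4 ∣ N) then
    ∀ a : ℤ, Int.gcd a ((N / 2 : ℕ) : ℤ) = 1 →
      IsIrreducibleE (monoSol N ((2 * a : ℤ) : ZMod N))
  else
    ∀ a : ℤ, Int.gcd a (N : ℤ) = 1 →
      IsIrreducibleE (monoSol N ((2 * a : ℤ) : ZMod N))


section StmtEightAux

variable {N : ℕ}

lemma Mword_nil' : Mword ([] : List (ZMod N)) = 1 := rfl

lemma Mword_cons' (x : ZMod N) (t : List (ZMod N)) : Mword (x :: t) = Mword t * genMat x := by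
  simp [Mword]

lemma Mword_append' (s t : List (ZMod N)) : Mword (s ++ t) = Mword t * Mword s := by
  simp [Mword]

lemma Mword_replicate' (m : ℕ) (k : ZMod N) :
    Mword (List.replicate m k) = (genMat k) ^ m := by
  simp [Mword]

lemma Mword_single' (x : ZMod N) : Mword [x] = genMat x := by simp [Mword]

lemma Mword_tuple' (a k : ZMod N) (m : ℕ) :
    Mword (a :: (List.replicate m k ++ [a])) = genMat a * (genMat k) ^ m * genMat a := by
  rw [Mword_cons', Mword_append', Mword_single', Mword_replicate']

/-- The inverse of `genMat k`. -/
def invMat (k : ZMod N) : Matrix (Fin 2) (Fin 2) (ZMod N) := !![0, 1; -1, k]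

lemma genMat_mul_invMat (k : ZMod N) : genMat k * invMat k = 1 := by
  simp [genMat, invMat, Matrix.mul_fin_two, Matrix.one_fin_two]

lemma pm_pow {M : Matrix (Fin 2) (Fin 2) (ZMod N)} (h : M = 1 ∨ M = -1) (t : ℕ) :
    M ^ t = 1 ∨ M ^ t = -1 := by
  rcases h with rfl | rfl
  · left; exact one_pow t
  · rcases Nat.even_or_odd t with he | ho
    · left; exact he.neg_one_pow
    · right; exact ho.neg_one_pow

lemma pm_neg {M : Matrix (Fin 2) (Fin 2) (ZMod N)} (h : -M = 1 ∨ -M = -1) :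
    M = 1 ∨ M = -1 := by
  rcases h with h | h
  · right; exact neg_eq_iff_eq_neg.mp h
  · left; exact neg_inj.mp h

lemma aux_r0 {a : ZMod N}
    (h : genMat a * genMat a = 1 ∨ genMat a * genMat a = -1) : a = 0 := by
  rcases h with h | h <;>
  · have h10 := congrFun (congrFun h 1) 0
    simp [genMat, Matrix.mul_apply, Fin.sum_univ_two, Matrix.one_apply] at h10
    exact h10

lemma aux_rn2 {a k : ZMod N} {X : Matrix (Fin 2) (Fin 2) (ZMod N)}
    (hX : X = invMat k * invMat k ∨ X = -(invMat k * invMat k))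
    (h : genMat a * X * genMat a = 1 ∨ genMat a * X * genMat a = -1) : a = k := by
  rcases hX with rfl | rfl <;> rcases h with h | h <;>
  · have h10 := congrFun (congrFun h 1) 0
    simp [genMat, invMat, Matrix.mul_apply, Fin.sum_univ_two, Matrix.one_apply] at h10
    first
    | linear_combination h10
    | linear_combination -h10

lemma aux_rn1 [Fact (1 < N)] {a k : ZMod N} {X : Matrix (Fin 2) (Fin 2) (ZMod N)}
    (hX : X = invMat k ∨ X = -(invMat k))
    (h : genMat a * X * genMat a = 1 ∨ genMat a * X * genMat a = -1) : False := by
  rcases hX with rfl | rfl <;> rcases h with h | h <;>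
  · have h01 := congrFun (congrFun h 0) 1
    simp [genMat, invMat, Matrix.mul_apply, Fin.sum_univ_two, Matrix.one_apply] at h01

lemma genMat_zero_sq : genMat (0 : ZMod N) * genMat 0 = -1 := by
  ext i j
  fin_cases i <;> fin_cases j <;>
    simp [genMat, Matrix.mul_apply, Fin.sum_univ_two, Matrix.one_apply]

lemma getLastD_cons_concat {α : Type*} (x y d : α) (l : List α) :
    (x :: (l ++ [y])).getLastD d = y := by
  rw [← List.cons_append, List.getLastD_concat]

lemma oplus_replicate (k a : ZMod N) (r s : ℕ) :
    oplus ((k - a) :: (List.replicate s k ++ [k - a])) (a :: (List.replicate r k ++ [a]))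
      = List.replicate (s + r + 2) k := by
  simp only [oplus, getLastD_cons_concat, List.headD_cons, List.drop_one, List.tail_cons,
    List.dropLast_concat, sub_add_cancel]
  rw [show (s + r + 2) = (s + 1) + (r + 1) by ring, List.replicate_add]
  simp [List.replicate_succ]

end StmtEightAux

/-- if the `k`-monomial minimal solution of `(E_N)` (of size `n`) is
irreducible, then for `l ≥ 2` and `a ∈ ZMod N`, the `l`-tuple `(a, k, …, k, a)` is a
solution of `(E_N)` iff `l ≡ 0 [MOD n]` and `a = k`, or `l ≡ 2 [MOD n]` and `a = 0`. -/
theorem stmt_8 (N : ℕ) (hN : 2 ≤ N) (k : ZMod N) (n : ℕ) (hn : n = monomialSize N k)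
    (hirr : IsIrreducibleE (monoSol N k)) (l : ℕ) (hl : 2 ≤ l) (a : ZMod N) :
    IsSolutionE (a :: (List.replicate (l - 2) k ++ [a])) ↔
      ((l ≡ 0 [MOD n] ∧ a = k) ∨ (l ≡ 2 [MOD n] ∧ a = 0)) := by
  haveI : Fact (1 < N) := ⟨by omega⟩
  have hmono : monoSol N k = List.replicate n k := by rw [monoSol, ← hn]
  have hn3 : 3 ≤ n := by
    have := hirr.2.1; rwa [hmono, List.length_replicate] at this
  have hS : (genMat k) ^ n = 1 ∨ (genMat k) ^ n = -1 := by
    have := hirr.1; rwa [hmono, IsSolutionE, Mword_replicate'] at this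
  constructor
  · intro hsol
    rw [IsSolutionE, Mword_tuple'] at hsol
    set m := l - 2 with hmdef
    set q := m / n with hq
    set r := m % n with hrdef
    have hr : r < n := Nat.mod_lt _ (by omega)
    have hAm : (genMat k) ^ m = ((genMat k) ^ n) ^ q * (genMat k) ^ r := by
      rw [← pow_mul, ← pow_add]
      congr 1
      exact (Nat.div_add_mod m n).symm
    have hSq := pm_pow hS q
    have H2 : genMat a * (genMat k) ^ r * genMat a = 1 ∨
        genMat a * (genMat k) ^ r * genMat a = -1 := by
      rcases hSq with h | h <;> rw [hAm, h] at hsol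
      · simpa using hsol
      · refine pm_neg ?_
        simpa [neg_mul, mul_neg] using hsol
    by_cases hr0 : r = 0
    · right
      have ha : a = 0 := by
        rw [hr0, pow_zero, mul_one] at H2
        exact aux_r0 H2
      refine ⟨?_, ha⟩
      have h1 : m ≡ 0 [MOD n] :=
        (Nat.modEq_zero_iff_dvd).2 (Nat.dvd_of_mod_eq_zero hr0)
      have h2 := h1.add_right 2
      rwa [show m + 2 = l by omega] at h2
    · by_cases hrn2 : r = n - 2
      · left
        have hApow : (genMat k) ^ r = (genMat k) ^ n * (invMat k * invMat k) := by
          have h2 : (genMat k) ^ 2 * (invMat k * invMat k) = 1 := by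
            rw [pow_two, mul_assoc, ← mul_assoc (genMat k) (invMat k) (invMat k),
              genMat_mul_invMat, one_mul, genMat_mul_invMat]
          have hnn : (genMat k) ^ n = (genMat k) ^ r * (genMat k) ^ 2 := by
            rw [← pow_add]; congr 1; omega
          rw [hnn, mul_assoc, h2, mul_one]
        have ha : a = k := by
          refine aux_rn2 ?_ H2
          rcases hS with h | h <;> rw [h] at hApow
          · left; rwa [one_mul] at hApow
          · right; rwa [neg_one_mul] at hApow
        refine ⟨?_, ha⟩
        have h2 : l ≡ r + 2 [MOD n] := by
          have := ((Nat.mod_modEq m n).symm).add_right 2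
          rwa [show m + 2 = l by omega] at this
        rw [hrn2, show n - 2 + 2 = n by omega] at h2
        exact h2.trans ((Nat.modEq_zero_iff_dvd).2 dvd_rfl)
      · by_cases hrn1 : r = n - 1
        · exfalso
          have hApow : (genMat k) ^ r = (genMat k) ^ n * invMat k := by
            have hnn : (genMat k) ^ n = (genMat k) ^ r * genMat k := by
              rw [← pow_succ]; congr 1; omega
            rw [hnn, mul_assoc, genMat_mul_invMat, mul_one]
          refine aux_rn1 (k := k) ?_ H2
          rcases hS with h | h <;> rw [h] at hApow
          · left; rwa [one_mul] at hApow
          · right; rwa [neg_one_mul] at hApow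
        · exfalso
          apply hirr.2.2
          refine ⟨(k - a) :: (List.replicate (n - r - 2) k ++ [k - a]),
            a :: (List.replicate r k ++ [a]), ?_, ?_, ?_, ?_⟩
          · simp only [List.length_cons, List.length_append, List.length_replicate,
              List.length_singleton]
            omega
          · simp only [List.length_cons, List.length_append, List.length_replicate,
              List.length_singleton]
            omega
          · rw [IsSolutionE, Mword_tuple']
            exact H2
          · left
            refine ⟨0, ?_⟩
            rw [List.rotate_zero, hmono, oplus_replicate]
            congr 1
            omega
  · rintro (⟨hl0, ha⟩ | ⟨hl2, ha⟩) <;> rw [ha]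
    · have hlist : k :: (List.replicate (l - 2) k ++ [k]) = List.replicate l k := by
        rw [← List.replicate_succ', ← List.replicate_succ]
        congr 1
        omega
      rw [IsSolutionE, hlist, Mword_replicate']
      obtain ⟨t, rfl⟩ : n ∣ l := (Nat.modEq_zero_iff_dvd).1 hl0
      rw [pow_mul]
      exact pm_pow hS t
    · have hdvd : n ∣ (l - 2) := by
        have h2 : (l - 2) + 2 ≡ 0 + 2 [MOD n] := by
          rw [show (l - 2) + 2 = l by omega]
          simpa using hl2
        exact (Nat.modEq_zero_iff_dvd).1 (Nat.ModEq.add_right_cancel' 2 h2)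
      obtain ⟨t, ht⟩ := hdvd
      rw [IsSolutionE, Mword_tuple', ht, pow_mul]
      rcases pm_pow hS t with h | h <;> rw [h]
      · right
        rw [mul_one]
        exact genMat_zero_sq
      · left
        rw [mul_neg, mul_one, neg_mul, genMat_zero_sq, neg_neg]
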